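/- Assume M = U Λ U⁻¹ is diagonalizable with U ∈ ℝ^{n×n} invertible and Λ real diagonal, all eigenvalues of M lie in an interval [a, b] where a and b have the same sign and 0, 1 ∉ [a, b], and m < p − 1. Then the aNGMRES(m, p) iterates from any u₀ satisfy ‖r_{jp}‖ ≤ (ε(a, b, m+1) · ‖M‖^p · κ₂(U))^j · ‖r₀‖ for all j ≥ 1. -/

import Mathlib

open Matrix Polynomial Set

noncomputable section

/-- Matrix–vector product, landing in Euclidean space. -/
def mulVecE {n : ℕ} (M : Matrix (Fin n) (Fin n) ℝ) (v : EuclideanSpace ℝ (Fin n)) :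
    EuclideanSpace ℝ (Fin n) :=
  WithLp.toLp 2 (M.mulVec v)

/-- Residual `r(u) = A u - b`. -/
def res {n : ℕ} (A : Matrix (Fin n) (Fin n) ℝ) (b u : EuclideanSpace ℝ (Fin n)) :
    EuclideanSpace ℝ (Fin n) :=
  mulVecE A u - b

/-- Richardson fixed-point map `q(u) = (I - A) u + b = M u + b` with `M = I - A`. -/
def fp {n : ℕ} (A : Matrix (Fin n) (Fin n) ℝ) (b u : EuclideanSpace ℝ (Fin n)) :
    EuclideanSpace ℝ (Fin n) :=
  mulVecE (1 - A) u + b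

/-- The NGMRES(m) least-squares objective at step `k`:
`β ↦ ‖r(q(u_k)) + Σ_{i=0}^m β_i (r(q(u_k)) - r(u_{k-i}))‖`. -/
def ngObj {n : ℕ} (A : Matrix (Fin n) (Fin n) ℝ) (b : EuclideanSpace ℝ (Fin n))
    (m : ℕ) (prev : ℕ → EuclideanSpace ℝ (Fin n)) (k : ℕ) (β : Fin (m+1) → ℝ) : ℝ :=
  ‖res A b (fp A b (prev k)) +
    ∑ i : Fin (m+1), β i • (res A b (fp A b (prev k)) - res A b (prev (k - (i : ℕ))))‖

/-- `next` is produced from `prev (k-m), …, prev k` by a single NGMRES(m) step: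
`next = q(u_k) + Σ_{i=0}^m β_i (q(u_k) - u_{k-i})` where `β` minimizes the
least-squares objective `ngObj`. -/
def NGMRESStep {n : ℕ} (A : Matrix (Fin n) (Fin n) ℝ) (b : EuclideanSpace ℝ (Fin n))
    (m : ℕ) (prev : ℕ → EuclideanSpace ℝ (Fin n)) (k : ℕ)
    (next : EuclideanSpace ℝ (Fin n)) : Prop :=
  ∃ β : Fin (m+1) → ℝ,
    (∀ γ : Fin (m+1) → ℝ, ngObj A b m prev k β ≤ ngObj A b m prev k γ) ∧
    next = fp A b (prev k) +
      ∑ i : Fin (m+1), β i • (fp A b (prev k) - prev (k - (i : ℕ)))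

/-- The spectral (ℓ²-operator) norm of a matrix. -/
def opNorm {n : ℕ} (M : Matrix (Fin n) (Fin n) ℝ) : ℝ :=
  ‖(Matrix.toEuclideanCLM (𝕜 := ℝ) M : EuclideanSpace ℝ (Fin n) →L[ℝ] EuclideanSpace ℝ (Fin n))‖

/-- The 2-norm condition number `κ₂(U) = ‖U‖ ‖U⁻¹‖`. -/
def condNum {n : ℕ} (U : Matrix (Fin n) (Fin n) ℝ) : ℝ :=
  opNorm U * opNorm U⁻¹

/-- `ε(a,b,s)`: minimum over real polynomials `p` of degree at most `s` with `p(1) = 1`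
of `max_{t ∈ [1/b, 1/a]} |p(t)|`. -/
def eps (a b : ℝ) (s : ℕ) : ℝ :=
  sInf {t : ℝ | ∃ p : Polynomial ℝ, p.natDegree ≤ s ∧ p.eval 1 = 1 ∧
    t = sSup ((fun x => |p.eval x|) '' Set.Icc (1/b) (1/a))}

/-- `χ(s)`: minimum over real polynomials `p` of degree at most `s` with `p(1) = 1`
of `max_{λ ∈ Σ(M)} |p(λ)|`, where `Σ(M)` is the set of eigenvalues of `M`. -/
def chiSp {n : ℕ} (M : Matrix (Fin n) (Fin n) ℝ) (s : ℕ) : ℝ :=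
  sInf {t : ℝ | ∃ p : Polynomial ℝ, p.natDegree ≤ s ∧ p.eval 1 = 1 ∧
    t = sSup ((fun x => |p.eval x|) '' spectrum ℝ M)}

/-- The Krylov subspace `K_k(A, r) = span{r, Ar, …, A^{k-1} r}`. -/
def Krylov {n : ℕ} (A : Matrix (Fin n) (Fin n) ℝ) (r : EuclideanSpace ℝ (Fin n)) (k : ℕ) :
    Submodule ℝ (EuclideanSpace ℝ (Fin n)) :=
  Submodule.span ℝ (Set.range fun i : Fin k => mulVecE (A ^ (i : ℕ)) r)

/-- The matrix `S_k = [u_{k-m+1}-u_{k-m}, …, u_k-u_{k-1}, q(u_k)-u_k] ∈ ℝ^{n×(m+1)}`. -/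
def Smat {n : ℕ} (A : Matrix (Fin n) (Fin n) ℝ) (b : EuclideanSpace ℝ (Fin n))
    (prev : ℕ → EuclideanSpace ℝ (Fin n)) (k m : ℕ) :
    Matrix (Fin n) (Fin (m+1)) ℝ :=
  Matrix.of fun r c =>
    if (c : ℕ) < m then prev (k - m + c + 1) r - prev (k - m + c) r
    else fp A b (prev k) r - prev k r

/-- `u` is the sequence of aNGMRES(m, p) iterates (with `m = ⊤` giving aNGMRES(∞, p)):
if `p ∤ k` then `u_k = q(u_{k-1})`, and if `p ∣ k` then `u_k` is produced by one
NGMRES(min(m, k-1)) step from `u_{k-1-m_k}, …, u_{k-1}`. -/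
def aNGMRES {n : ℕ} (A : Matrix (Fin n) (Fin n) ℝ) (b : EuclideanSpace ℝ (Fin n))
    (m : ℕ∞) (p : ℕ) (u : ℕ → EuclideanSpace ℝ (Fin n)) : Prop :=
  ∀ k, 1 ≤ k →
    (¬ p ∣ k → u k = fp A b (u (k-1))) ∧
    (p ∣ k → NGMRESStep A b (min m ((k : ℕ∞) - 1)).toNat u (k-1) (u k))
/-! ### Auxiliary lemmas -/

section Aux

variable {n : ℕ} (A M N : Matrix (Fin n) (Fin n) ℝ) (b x y : EuclideanSpace ℝ (Fin n))

lemma mulVecE_add : mulVecE M (x + y) = mulVecE M x + mulVecE M y := by simp [mulVecE, Matrix.mulVec_add]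
lemma mulVecE_sub : mulVecE M (x - y) = mulVecE M x - mulVecE M y := by simp [mulVecE, Matrix.mulVec_sub]
lemma mulVecE_mul : mulVecE (M * N) x = mulVecE M (mulVecE N x) := by simp [mulVecE, Matrix.mulVec_mulVec]
lemma mulVecE_smul (c : ℝ) : mulVecE M (c • x) = c • mulVecE M x := by simp [mulVecE, Matrix.mulVec_smul]
lemma mulVecE_one : mulVecE 1 x = x := by simp [mulVecE]
lemma mulVecE_addM : mulVecE (M + N) x = mulVecE M x + mulVecE N x := by simp [mulVecE, Matrix.add_mulVec]
lemma mulVecE_subM : mulVecE (M - N) x = mulVecE M x - mulVecE N x := by simp [mulVecE, Matrix.sub_mulVec]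
lemma mulVecE_smulM (c : ℝ) : mulVecE (c • M) x = c • mulVecE M x := by simp [mulVecE, Matrix.smul_mulVec]

lemma mulVecE_sumM {ι : Type*} (s : Finset ι) (f : ι → Matrix (Fin n) (Fin n) ℝ) :
    mulVecE (∑ i ∈ s, f i) x = ∑ i ∈ s, mulVecE (f i) x := by
  classical
  induction s using Finset.induction with
  | empty => simp [mulVecE]
  | insert _ _ h ih => rw [Finset.sum_insert h, Finset.sum_insert h, mulVecE_addM, ih]

lemma mulVecE_sum {ι : Type*} (s : Finset ι) (f : ι → EuclideanSpace ℝ (Fin n)) :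
    mulVecE M (∑ i ∈ s, f i) = ∑ i ∈ s, mulVecE M (f i) := by
  classical
  induction s using Finset.induction with
  | empty => simp [mulVecE]
  | insert _ _ h ih => rw [Finset.sum_insert h, Finset.sum_insert h, mulVecE_add, ih]

lemma clm_apply : Matrix.toEuclideanCLM (𝕜 := ℝ) M x = mulVecE M x := by
  rw [mulVecE, ← Matrix.ofLp_toEuclideanCLM, WithLp.toLp_ofLp]

lemma opNorm_nonneg' : 0 ≤ opNorm M := norm_nonneg _

lemma mulVecE_norm_le : ‖mulVecE M x‖ ≤ opNorm M * ‖x‖ := by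
  rw [← clm_apply]; exact (Matrix.toEuclideanCLM (𝕜 := ℝ) M).le_opNorm x

lemma mulVecE_pow_norm_le (k : ℕ) : ‖mulVecE (M ^ k) x‖ ≤ opNorm M ^ k * ‖x‖ := by
  induction k generalizing x with
  | zero => simp [mulVecE_one, mulVecE]
  | succ k ih =>
      rw [pow_succ']
      calc ‖mulVecE (M * M ^ k) x‖ = ‖mulVecE M (mulVecE (M ^ k) x)‖ := by
            rw [mulVecE_mul]
        _ ≤ opNorm M * ‖mulVecE (M ^ k) x‖ := mulVecE_norm_le _ _
        _ ≤ opNorm M * (opNorm M ^ k * ‖x‖) :=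
            mul_le_mul_of_nonneg_left (ih x) (opNorm_nonneg' M)
        _ = opNorm M ^ (k+1) * ‖x‖ := by ring

lemma mulVecE_diag_norm_le (e : Fin n → ℝ) (B : ℝ) (hB : 0 ≤ B) (h : ∀ i, |e i| ≤ B) :
    ‖mulVecE (Matrix.diagonal e) x‖ ≤ B * ‖x‖ := by
  rw [EuclideanSpace.norm_eq, EuclideanSpace.norm_eq]
  rw [← Real.sqrt_sq hB, ← Real.sqrt_mul (by positivity), Finset.mul_sum]
  apply Real.sqrt_le_sqrt
  apply Finset.sum_le_sum
  intro i _
  have hdi : mulVecE (Matrix.diagonal e) x i = e i * x i := by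
    simp [mulVecE, Matrix.mulVec_diagonal]
  rw [hdi]
  have h1 : ‖e i * x i‖ = |e i| * ‖x i‖ := by
    simp [Real.norm_eq_abs, abs_mul]
  rw [h1, mul_pow]
  have := h i
  have h2 : |e i| ^ 2 ≤ B ^ 2 := by nlinarith [abs_nonneg (e i)]
  nlinarith [sq_nonneg (‖x i‖), norm_nonneg (x i)]

lemma eig_le_opNorm (U : Matrix (Fin n) (Fin n) ℝ) (d : Fin n → ℝ) (hU : IsUnit U)
    (hM : M = U * Matrix.diagonal d * U⁻¹) (i : Fin n) : |d i| ≤ opNorm M := by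
  have hUdet : IsUnit U.det := (Matrix.isUnit_iff_isUnit_det U).mp hU
  set s : EuclideanSpace ℝ (Fin n) := EuclideanSpace.single i 1 with hs
  set x : EuclideanSpace ℝ (Fin n) := mulVecE U s with hx
  have hinv : mulVecE U⁻¹ (mulVecE U s) = s := by
    rw [← mulVecE_mul, Matrix.nonsing_inv_mul U hUdet, mulVecE_one]
  have hds : mulVecE (Matrix.diagonal d) s = d i • s := by
    ext j
    simp only [mulVecE, WithLp.ofLp_toLp, WithLp.ofLp_smul]
    rw [Matrix.mulVec_diagonal]
    by_cases hj : j = i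
    · subst hj; simp [hs]
    · simp [hs, EuclideanSpace.single_apply, hj]
  have hMx : mulVecE M x = d i • x := by
    rw [hM, mulVecE_mul, mulVecE_mul, hx, hinv, hds, mulVecE_smul]
  have hxne : x ≠ 0 := by
    intro h0
    have h1 : s = 0 := by
      rw [← hinv, ← hx, h0]
      simp [mulVecE]
    have : s i = 0 := by rw [h1]; rfl
    simp [hs, EuclideanSpace.single_apply] at this
  have hxpos : 0 < ‖x‖ := norm_pos_iff.mpr hxne
  have := mulVecE_norm_le M x
  rw [hMx, norm_smul, Real.norm_eq_abs] at this
  exact le_of_mul_le_mul_right (by linarith) hxpos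

lemma res_fp (u : EuclideanSpace ℝ (Fin n)) :
    res A b (fp A b u) = mulVecE (1 - A) (res A b u) := by
  unfold res fp
  have hcomm : A * (1 - A) = (1 - A) * A := by
    rw [Matrix.mul_sub, Matrix.sub_mul, Matrix.mul_one, Matrix.one_mul]
  rw [mulVecE_add, mulVecE_sub, ← mulVecE_mul, ← mulVecE_mul, hcomm, mulVecE_subM, mulVecE_one]
  abel

lemma res_affine (m : ℕ) (β : Fin (m+1) → ℝ) (x : EuclideanSpace ℝ (Fin n))
    (yy : Fin (m+1) → EuclideanSpace ℝ (Fin n)) :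
    res A b (x + ∑ i, β i • (x - yy i)) =
      res A b x + ∑ i, β i • (res A b x - res A b (yy i)) := by
  unfold res
  rw [mulVecE_add, mulVecE_sum]
  have h : ∀ i : Fin (m+1), mulVecE A (β i • (x - yy i)) =
      β i • ((mulVecE A x - b) - (mulVecE A (yy i) - b)) := by
    intro i
    rw [mulVecE_smul, mulVecE_sub]
    congr 1
    abel
  rw [Finset.sum_congr rfl fun i _ => h i]
  abel

lemma conjPow (U D : Matrix (Fin n) (Fin n) ℝ) (hU : IsUnit U.det) (j : ℕ) :
    (U * D * U⁻¹) ^ j = U * D ^ j * U⁻¹ := by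
  induction j with
  | zero => simp [Matrix.mul_nonsing_inv U hU]
  | succ j ih =>
      rw [pow_succ, ih, pow_succ]
      have h : U * D ^ j * U⁻¹ * (U * D * U⁻¹) = U * D ^ j * (U⁻¹ * U) * D * U⁻¹ := by
        noncomm_ring
      rw [h, Matrix.nonsing_inv_mul U hU, Matrix.mul_one, Matrix.mul_assoc U]

lemma diag_poly (d : Fin n → ℝ) (m : ℕ) (c : ℕ → ℝ) :
    ∑ j ∈ Finset.range (m+2), c j • (Matrix.diagonal d) ^ j =
      Matrix.diagonal (fun i => ∑ j ∈ Finset.range (m+2), c j * d i ^ j) := by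
  ext i k
  simp only [Matrix.sum_apply, Matrix.smul_apply, Matrix.diagonal_pow, smul_eq_mul]
  by_cases h : i = k
  · subst h; simp [Matrix.diagonal_apply_eq]
  · simp [Matrix.diagonal_apply_ne _ h, h]

lemma rev_eval (q : Polynomial ℝ) (m : ℕ) (hq : q.natDegree ≤ m+1) (y : ℝ) (hy : y ≠ 0) :
    ∑ j ∈ Finset.range (m+2), q.coeff (m+1-j) * y ^ j = y ^ (m+1) * q.eval (1/y) := by
  rw [Polynomial.eval_eq_sum_range' (Nat.lt_succ_of_le hq), Finset.mul_sum]
  rw [← Finset.sum_range_reflect]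
  apply Finset.sum_congr rfl
  intro j hj
  rw [Finset.mem_range] at hj
  have e0 : m + 2 - 1 - j = m + 1 - j := by omega
  have h1 : m + 1 - (m + 1 - j) = j := by omega
  rw [e0, h1]
  have key : y ^ (m+1-j) * y ^ j = y ^ (m+1) := by
    rw [← pow_add]; congr 1; omega
  rw [one_div, inv_pow, mul_comm (y ^ (m+1)), mul_assoc, inv_mul_eq_div]
  congr 1
  rw [eq_div_iff (pow_ne_zero _ hy)]
  exact key

lemma coeff_sum_one (q : Polynomial ℝ) (m : ℕ) (hq : q.natDegree ≤ m+1) (h1 : q.eval 1 = 1) :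
    ∑ j ∈ Finset.range (m+2), q.coeff j = 1 := by
  have := Polynomial.eval_eq_sum_range' (Nat.lt_succ_of_le hq) (1:ℝ)
  simpa [h1] using this.symm

lemma T_eq (q : Polynomial ℝ) (m p : ℕ) (hmp : m + 1 ≤ p - 1)
    (hp : 2 ≤ p) (hq : q.natDegree ≤ m+1) (h1 : q.eval 1 = 1) :
    M ^ p + ∑ i : Fin (m+1), (-q.coeff (i+1)) • (M ^ p - M ^ (p-1-(i:ℕ))) =
      M ^ (p-1-m) * ∑ j ∈ Finset.range (m+2), q.coeff (m+1-j) • M ^ j := by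
  have hsum := coeff_sum_one q m hq h1
  rw [Finset.mul_sum]
  have hr : ∀ j ∈ Finset.range (m+2), M ^ (p-1-m) * (q.coeff (m+1-j) • M ^ j)
      = q.coeff (m+1-j) • M ^ (p-1-m+j) := by
    intro j hj
    rw [Matrix.mul_smul, ← pow_add]
  rw [Finset.sum_congr rfl hr]
  rw [Finset.sum_range_succ]
  have e1 : p - 1 - m + (m+1) = p := by omega
  have e2 : m + 1 - (m+1) = 0 := by omega
  rw [e1, e2]
  have hl : ∀ i : Fin (m+1), (-q.coeff (i+1)) • (M ^ p - M ^ (p-1-(i:ℕ)))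
      = q.coeff ((i:ℕ)+1) • M ^ (p-1-(i:ℕ)) - q.coeff ((i:ℕ)+1) • M ^ p := by
    intro i
    rw [neg_smul, smul_sub, neg_sub]
  rw [Finset.sum_congr rfl (fun i _ => hl i), Finset.sum_sub_distrib]
  rw [← Finset.sum_smul]
  have hs1 : ∑ i : Fin (m+1), q.coeff ((i:ℕ)+1) = 1 - q.coeff 0 := by
    rw [Fin.sum_univ_eq_sum_range (fun k => q.coeff (k+1)) (m+1)]
    have := hsum
    rw [Finset.sum_range_succ'] at this
    linarith
  rw [hs1]
  have hs2 : ∑ i : Fin (m+1), q.coeff ((i:ℕ)+1) • M ^ (p-1-(i:ℕ))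
      = ∑ j ∈ Finset.range (m+1), q.coeff (m+1-j) • M ^ (p-1-m+j) := by
    rw [Fin.sum_univ_eq_sum_range (fun k => q.coeff (k+1) • M ^ (p-1-k)) (m+1),
      ← Finset.sum_range_reflect]
    apply Finset.sum_congr rfl
    intro j hj
    rw [Finset.mem_range] at hj
    have e3 : m + 1 - 1 - j + 1 = m + 1 - j := by omega
    have e4 : p - 1 - (m + 1 - 1 - j) = p - 1 - m + j := by omega
    rw [e3, e4]
  rw [hs2]
  module

end Aux

/-- aNGMRES(m, p), m < p-1, diagonalizable case:
`‖r_{jp}‖ ≤ (ε(a, b, m+1) ‖M‖^p κ₂(U))^j ‖r₀‖`. -/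
theorem stmt_14 {n m p : ℕ} (hmp : m < p - 1) (A U : Matrix (Fin n) (Fin n) ℝ)
    (d : Fin n → ℝ) (hA : IsUnit A) (hU : IsUnit U)
    (hM : (1 : Matrix (Fin n) (Fin n) ℝ) - A = U * Matrix.diagonal d * U⁻¹)
    (a c : ℝ) (hac : a < c) (hsign : 0 < a * c)
    (h0 : (0 : ℝ) ∉ Set.Icc a c) (h1 : (1 : ℝ) ∉ Set.Icc a c)
    (hd : ∀ i, d i ∈ Set.Icc a c)
    (b : EuclideanSpace ℝ (Fin n)) (u : ℕ → EuclideanSpace ℝ (Fin n))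
    (hu : aNGMRES A b (m : ℕ∞) p u) :
    ∀ j : ℕ, 1 ≤ j →
      ‖res A b (u (j * p))‖ ≤
        (eps a c (m+1) * opNorm ((1 : Matrix (Fin n) (Fin n) ℝ) - A) ^ p * condNum U) ^ j *
          ‖res A b (u 0)‖ := by
  have hp2 : 2 ≤ p := by omega
  have hm1p : m + 1 ≤ p - 1 := by omega
  set M : Matrix (Fin n) (Fin n) ℝ := 1 - A with hMdef
  have hUdet : IsUnit U.det := (Matrix.isUnit_iff_isUnit_det U).mp hU
  have hcd : condNum U = opNorm U * opNorm U⁻¹ := rfl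
  -- interval facts
  have hsgn : (0 < a ∧ 0 < c) ∨ (a < 0 ∧ c < 0) := by
    rcases lt_trichotomy a 0 with h|h|h
    · right; refine ⟨h, ?_⟩; by_contra hcc; push_neg at hcc; nlinarith
    · rw [h] at hsign; simp at hsign
    · left; exact ⟨h, by linarith⟩
  have hinvmem : ∀ y ∈ Set.Icc a c, 1/y ∈ Set.Icc (1/c) (1/a) := by
    rintro y ⟨hy1, hy2⟩
    rcases hsgn with ⟨ha', hc'⟩ | ⟨ha', hc'⟩
    · exact ⟨one_div_le_one_div_of_le (by linarith) hy2, one_div_le_one_div_of_le ha' hy1⟩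
    · exact ⟨one_div_le_one_div_of_neg_of_le hc' hy2,
        one_div_le_one_div_of_neg_of_le (by linarith) hy1⟩
  have hca : (1:ℝ)/c ≤ 1/a := (hinvmem c ⟨hac.le, le_rfl⟩).2
  have hdne : ∀ i, d i ≠ 0 := fun i hzero => h0 (hzero ▸ hd i)
  have heig : ∀ i, |d i| ≤ opNorm M := fun i => eig_le_opNorm M U d hU hM i
  -- sSup facts
  have hsup : ∀ q : Polynomial ℝ, BddAbove ((fun x => |q.eval x|) '' Set.Icc (1/c) (1/a)) :=
    fun q => (isCompact_Icc.image (Polynomial.continuous q).abs).bddAbove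
  have hsupnn : ∀ q : Polynomial ℝ,
      0 ≤ sSup ((fun x => |q.eval x|) '' Set.Icc (1/c) (1/a)) := fun q =>
    le_trans (abs_nonneg (q.eval (1/c))) (le_csSup (hsup q) ⟨1/c, ⟨le_rfl, hca⟩, rfl⟩)
  have hepsnn : 0 ≤ eps a c (m+1) := by
    apply Real.sInf_nonneg
    rintro t ⟨q, _, _, rfl⟩
    exact hsupnn q
  have hcondnn : 0 ≤ condNum U := by
    rw [hcd]; exact mul_nonneg (opNorm_nonneg' U) (opNorm_nonneg' U⁻¹)
  set C := eps a c (m+1) * opNorm M ^ p * condNum U with hCdef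
  have hC0 : 0 ≤ C :=
    mul_nonneg (mul_nonneg hepsnn (pow_nonneg (opNorm_nonneg' M) p)) hcondnn
  -- Richardson chain
  have hchain : ∀ jj t : ℕ, t < p →
      res A b (u (jj*p + t)) = mulVecE (M ^ t) (res A b (u (jj*p))) := by
    intro jj t
    induction t with
    | zero => intro _; rw [Nat.add_zero, pow_zero, mulVecE_one]
    | succ t ih =>
        intro ht
        have hnd : ¬ p ∣ jj * p + (t + 1) := by
          intro hdvd
          have h2 : p ∣ t + 1 := (Nat.dvd_add_right (dvd_mul_left p jj)).mp hdvd
          exact absurd (Nat.le_of_dvd (Nat.succ_pos t) h2) (by omega)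
        have hstep := (hu (jj*p + (t+1)) (by omega)).1 hnd
        rw [show jj*p + (t+1) - 1 = jj*p + t from by omega] at hstep
        rw [hstep, res_fp, ih (by omega), ← hMdef, ← mulVecE_mul, ← pow_succ']
  -- one-cycle bound
  have key : ∀ j : ℕ, 1 ≤ j →
      ‖res A b (u (j*p))‖ ≤ C * ‖res A b (u ((j-1)*p))‖ := by
    intro j hj
    obtain ⟨j', rfl⟩ : ∃ j', j = j' + 1 := ⟨j - 1, by omega⟩
    simp only [Nat.add_sub_cancel]
    have hjp : (j'+1)*p = j'*p + p := by ring
    have hge1 : 1 ≤ (j'+1)*p := by rw [hjp]; omega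
    have hdvd : p ∣ (j'+1)*p := dvd_mul_left p (j'+1)
    have hstep0 := (hu ((j'+1)*p) hge1).2 hdvd
    have hmle : m ≤ (j'+1)*p - 1 := by rw [hjp]; omega
    have hminm : (min (↑m : ℕ∞) ((((j'+1)*p : ℕ) : ℕ∞) - 1)).toNat = m := by
      have hcast : (((j'+1)*p : ℕ) : ℕ∞) - 1 = (((j'+1)*p - 1 : ℕ) : ℕ∞) :=
        (ENat.coe_sub ((j'+1)*p) 1).symm
      rw [hcast, min_eq_left (by exact_mod_cast hmle), ENat.toNat_coe]
    rw [hminm] at hstep0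
    obtain ⟨β, hopt, hnext⟩ := hstep0
    set r : EuclideanSpace ℝ (Fin n) := res A b (u (j'*p)) with hrdef
    set k : ℕ := (j'+1)*p - 1 with hkdef
    have hr1 : res A b (u k) = mulVecE (M ^ (p-1)) r := by
      rw [show k = j'*p + (p-1) from by rw [hkdef, hjp]; omega]
      exact hchain j' (p-1) (by omega)
    have hfp : res A b (fp A b (u k)) = mulVecE (M ^ p) r := by
      rw [res_fp, hr1, ← hMdef, ← mulVecE_mul, ← pow_succ',
        show p - 1 + 1 = p from by omega]
    have hri : ∀ i : Fin (m+1), res A b (u (k - (i:ℕ))) = mulVecE (M ^ (p-1-(i:ℕ))) r := by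
      intro i
      have hi : (i:ℕ) ≤ m := by omega
      rw [show k - (i:ℕ) = j'*p + (p-1-(i:ℕ)) from by
        rw [hkdef, hjp]; omega]
      exact hchain j' (p-1-(i:ℕ)) (by omega)
    have hresnext : ‖res A b (u ((j'+1)*p))‖ = ngObj A b m u k β := by
      unfold ngObj
      rw [hnext, res_affine]
    set K := opNorm M ^ p * condNum U * ‖r‖ with hKdef
    have hKnn : 0 ≤ K :=
      mul_nonneg (mul_nonneg (pow_nonneg (opNorm_nonneg' M) p) hcondnn) (norm_nonneg r)
    have hbound : ∀ t ∈ {t : ℝ | ∃ q : Polynomial ℝ, q.natDegree ≤ m+1 ∧ q.eval 1 = 1 ∧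
        t = sSup ((fun x => |q.eval x|) '' Set.Icc (1/c) (1/a))},
        ‖res A b (u ((j'+1)*p))‖ ≤ K * t := by
      rintro t ⟨q, hqdeg, hq1, rfl⟩
      set S := sSup ((fun x => |q.eval x|) '' Set.Icc (1/c) (1/a)) with hSdef
      have hSnn : 0 ≤ S := hsupnn q
      set e : Fin n → ℝ := fun i => ∑ jj ∈ Finset.range (m+2), q.coeff (m+1-jj) * d i ^ jj
        with hedef
      have hebd : ∀ i, |e i| ≤ opNorm M ^ (m+1) * S := by
        intro i
        have hrev : e i = d i ^ (m+1) * q.eval (1/(d i)) :=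
          rev_eval q m hqdeg (d i) (hdne i)
        rw [hrev, abs_mul, abs_pow]
        apply mul_le_mul (pow_le_pow_left₀ (abs_nonneg _) (heig i) (m+1)) ?_ (abs_nonneg _)
          (pow_nonneg (opNorm_nonneg' M) _)
        exact le_csSup (hsup q) ⟨1/(d i), hinvmem (d i) (hd i), rfl⟩
      have hT : M ^ p + ∑ i : Fin (m+1), (-q.coeff ((i:ℕ)+1)) • (M ^ p - M ^ (p-1-(i:ℕ)))
          = M ^ (p-1-m) * ∑ jj ∈ Finset.range (m+2), q.coeff (m+1-jj) • M ^ jj :=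
        T_eq M q m p hm1p hp2 hqdeg hq1
      have hN : (∑ jj ∈ Finset.range (m+2), q.coeff (m+1-jj) • M ^ jj)
          = U * Matrix.diagonal e * U⁻¹ := by
        calc ∑ jj ∈ Finset.range (m+2), q.coeff (m+1-jj) • M ^ jj
            = ∑ jj ∈ Finset.range (m+2),
                U * (q.coeff (m+1-jj) • (Matrix.diagonal d) ^ jj) * U⁻¹ := by
              apply Finset.sum_congr rfl
              intro jj _
              rw [hM, conjPow U _ hUdet, Matrix.mul_smul, Matrix.smul_mul]
          _ = U * (∑ jj ∈ Finset.range (m+2),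
                q.coeff (m+1-jj) • (Matrix.diagonal d) ^ jj) * U⁻¹ := by
              rw [Finset.mul_sum, Finset.sum_mul]
          _ = U * Matrix.diagonal e * U⁻¹ := by rw [diag_poly]
      have hBnn : 0 ≤ opNorm M ^ (m+1) * S :=
        mul_nonneg (pow_nonneg (opNorm_nonneg' M) _) hSnn
      calc ‖res A b (u ((j'+1)*p))‖ = ngObj A b m u k β := hresnext
        _ ≤ ngObj A b m u k (fun i => -q.coeff ((i:ℕ)+1)) := hopt _
        _ = ‖mulVecE (M ^ p + ∑ i : Fin (m+1),
              (-q.coeff ((i:ℕ)+1)) • (M ^ p - M ^ (p-1-(i:ℕ)))) r‖ := by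
            unfold ngObj
            rw [mulVecE_addM, mulVecE_sumM, hfp]
            congr 1
            apply congrArg
            apply Finset.sum_congr rfl
            intro i _
            simp only [mulVecE_smulM, mulVecE_subM, hfp, hri i]
        _ = ‖mulVecE (M ^ (p-1-m))
              (mulVecE U (mulVecE (Matrix.diagonal e) (mulVecE U⁻¹ r)))‖ := by
            rw [hT, hN, mulVecE_mul, mulVecE_mul, mulVecE_mul]
        _ ≤ opNorm M ^ (p-1-m) *
              (opNorm U * ((opNorm M ^ (m+1) * S) * (opNorm U⁻¹ * ‖r‖))) := by
            apply le_trans (mulVecE_pow_norm_le M _ (p-1-m))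
            apply mul_le_mul_of_nonneg_left ?_ (pow_nonneg (opNorm_nonneg' M) _)
            apply le_trans (mulVecE_norm_le U _)
            apply mul_le_mul_of_nonneg_left ?_ (opNorm_nonneg' U)
            apply le_trans (mulVecE_diag_norm_le _ e _ hBnn hebd)
            apply mul_le_mul_of_nonneg_left ?_ hBnn
            exact mulVecE_norm_le U⁻¹ r
        _ = K * S := by
            have hpow : opNorm M ^ (p-1-m) * opNorm M ^ (m+1) = opNorm M ^ p := by
              rw [← pow_add]; congr 1; omega
            rw [hKdef, hcd]
            linear_combination (opNorm U * opNorm U⁻¹ * ‖r‖ * S) * hpow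
    have hnonempty : Set.Nonempty {t : ℝ | ∃ q : Polynomial ℝ, q.natDegree ≤ m+1 ∧
        q.eval 1 = 1 ∧ t = sSup ((fun x => |q.eval x|) '' Set.Icc (1/c) (1/a))} :=
      ⟨_, 1, by simp, by simp, rfl⟩
    have heps : eps a c (m+1) = sInf {t : ℝ | ∃ q : Polynomial ℝ, q.natDegree ≤ m+1 ∧
        q.eval 1 = 1 ∧ t = sSup ((fun x => |q.eval x|) '' Set.Icc (1/c) (1/a))} := rfl
    by_cases hK : K = 0
    · obtain ⟨t0, ht0⟩ := hnonempty
      have hb0 := hbound t0 ht0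
      rw [hK, zero_mul] at hb0
      have hCr : 0 ≤ C * ‖r‖ := mul_nonneg hC0 (norm_nonneg r)
      linarith
    · have hKpos : 0 < K := lt_of_le_of_ne hKnn (Ne.symm hK)
      have hle : ‖res A b (u ((j'+1)*p))‖ / K ≤ eps a c (m+1) := by
        rw [heps]
        apply le_csInf hnonempty
        intro t ht
        rw [div_le_iff₀ hKpos]
        exact le_trans (hbound t ht) (le_of_eq (mul_comm K t))
      have hfin := (div_le_iff₀ hKpos).mp hle
      calc ‖res A b (u ((j'+1)*p))‖ ≤ eps a c (m+1) * K := hfin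
        _ = C * ‖r‖ := by rw [hKdef, hCdef]; ring
  -- induction
  intro j hj
  induction j, hj using Nat.le_induction with
  | base =>
      have hk := key 1 le_rfl
      simpa using hk
  | succ j hj ih =>
      have hk := key (j+1) (by omega)
      simp only [Nat.add_sub_cancel] at hk
      calc ‖res A b (u ((j+1)*p))‖ ≤ C * ‖res A b (u (j*p))‖ := hk
        _ ≤ C * (C^j * ‖res A b (u 0)‖) := mul_le_mul_of_nonneg_left ih hC0
        _ = C^(j+1) * ‖res A b (u 0)‖ := by ring

end
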